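/- Let X be a Dedekind complete pre-Riesz space and let 𝒫 be a set of band projections on X. Then there exists a unique band projection P₀ on X whose range equals ⋂_{P ∈ 𝒫} PX; and if 𝒫 is nonempty, then for each x ∈ X₊ the element P₀x is the infimum of the set {Px : P ∈ 𝒫} in X. In particular, the intersection of arbitrarily many projection bands in a Dedekind complete pre-Riesz space is again a projection band. -/

import Mathlib

open Pointwise

variable {X : Type*} [AddCommGroup X] [PartialOrder X] [IsOrderedAddMonoid X] [Module ℝ X]
    [PosSMulStrictMono ℝ X] [PosSMulReflectLT ℝ X]

/-- Two elements of an ordered vector space are disjoint if the sets `{x+y, -x-y}` and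
`{x-y, y-x}` have the same set of upper bounds. -/
def UDisjoint (x y : X) : Prop :=
  upperBounds ({x + y, -x - y} : Set X) = upperBounds ({x - y, y - x} : Set X)

/-- The disjoint complement `S^⊥` of a set `S`. -/
def dComp (S : Set X) : Set X := {x : X | ∀ s ∈ S, UDisjoint x s}

/-- A band: a set equal to its double disjoint complement. -/
def IsBand (B : Set X) : Prop := B = dComp (dComp B)

/-- A projection band: a band `B` with `B ∩ B^⊥ = {0}` and `B + B^⊥ = X`. -/
def IsProjBand (B : Set X) : Prop :=
  IsBand B ∧ B ∩ dComp B = {0} ∧ ∀ x : X, ∃ b ∈ B, ∃ c ∈ dComp B, x = b + c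

/-- A positive linear operator. -/
def IsPosMap (T : X →ₗ[ℝ] X) : Prop := ∀ x : X, 0 ≤ x → 0 ≤ T x

/-- A band projection: a linear projection whose range is a projection band and whose
kernel is the disjoint complement of the range. -/
def IsBandProj (P : X →ₗ[ℝ] X) : Prop :=
  P ∘ₗ P = P ∧ IsProjBand (Set.range ⇑P) ∧ (LinearMap.ker P : Set X) = dComp (Set.range ⇑P)

/-- A pre-Riesz space: for every nonempty finite `A ⊆ X` and every `x`, if the upper bounds
of `x + A` are contained in the upper bounds of `A`, then `x ≥ 0`. -/
def IsPreRiesz (X : Type*) [AddCommGroup X] [PartialOrder X] [IsOrderedAddMonoid X] [Module ℝ X]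
    [PosSMulStrictMono ℝ X] [PosSMulReflectLT ℝ X] : Prop :=
  ∀ (A : Set X) (x : X), A.Finite → A.Nonempty →
    upperBounds ((x + ·) '' A) ⊆ upperBounds A → 0 ≤ x

set_option linter.unusedSectionVars false
set_option maxHeartbeats 1000000

lemma aux_half_eq (a : X) : (1/2 : ℝ) • (a + a) = a := by
  rw [← two_smul ℝ a, smul_smul]; norm_num

lemma aux_half_nonneg {a : X} (h : 0 ≤ a + a) : 0 ≤ a := by
  have := smul_nonneg (by norm_num : (0:ℝ) ≤ 1/2) h
  rwa [aux_half_eq] at this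

lemma aux_half_le {a b : X} (h : a + a ≤ b + b) : a ≤ b := by
  have h0 : (0:X) ≤ (b - a) + (b - a) := by
    have h1 := sub_nonneg.mpr h
    calc (0:X) ≤ b + b - (a + a) := h1
    _ = (b - a) + (b - a) := by abel
  have := aux_half_nonneg h0
  exact sub_nonneg.mp this

lemma mem_ub_pair {a b c : X} : c ∈ upperBounds ({a, b} : Set X) ↔ a ≤ c ∧ b ≤ c := by
  simp [upperBounds]

lemma ub_pair_subst_set {a b a' b' : X} (h1 : a = a') (h2 : b = b') :
    ({a, b} : Set X) = ({a', b'} : Set X) := by rw [h1, h2]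

lemma ub_pair_subst {a b a' b' : X} (h1 : a = a') (h2 : b = b') :
    upperBounds ({a, b} : Set X) = upperBounds ({a', b'} : Set X) := by rw [h1, h2]

lemma ud_symm {x y : X} (h : UDisjoint x y) : UDisjoint y x := by
  unfold UDisjoint at h ⊢
  rw [Set.pair_comm (y - x) (x - y)]
  calc upperBounds ({y + x, -y - x} : Set X)
      = upperBounds ({x + y, -x - y} : Set X) := ub_pair_subst (by abel) (by abel)
    _ = upperBounds ({x - y, y - x} : Set X) := h

lemma ud_zero (y : X) : UDisjoint 0 y := by
  unfold UDisjoint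
  rw [Set.pair_comm ((0:X) - y) (y - 0)]
  exact ub_pair_subst (by abel) (by abel)

lemma ud_self {x : X} (h : UDisjoint x x) : x = 0 := by
  unfold UDisjoint at h
  have h0 : (0:X) ∈ upperBounds ({x - x, x - x} : Set X) := by
    rw [mem_ub_pair]; constructor <;> simp
  rw [← h, mem_ub_pair] at h0
  obtain ⟨h1, h2⟩ := h0
  have h2' : (0:X) ≤ x + x := by
    have h3 : -(x+x) ≤ 0 := by
      calc -(x+x) = -x - x := by abel
        _ ≤ 0 := h2
    exact neg_nonpos.mp h3
  have h4 : x + x = 0 := le_antisymm h1 h2'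
  have h5 := aux_half_eq x
  rw [h4, smul_zero] at h5
  exact h5.symm

lemma aux_vanish (hX : IsPreRiesz X) (z q : X)
    (h1 : upperBounds ({z, -z} : Set X) = upperBounds ({z - (q + q), (q + q) - z} : Set X))
    (h2 : upperBounds ({z + (q + q), -z - (q + q)} : Set X)
        = upperBounds ({z - (q + q), (q + q) - z} : Set X)) :
    q = 0 := by
  set r := q + q with hr
  have key : ∀ c ∈ upperBounds ({z, -z} : Set X),
      z - r ≤ c ∧ r - z ≤ c ∧ z + r ≤ c ∧ -z - r ≤ c := by
    intro c hc
    have hc1 : c ∈ upperBounds ({z - r, r - z} : Set X) := h1 ▸ hc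
    have hc2 : c ∈ upperBounds ({z + r, -z - r} : Set X) := by rw [h2]; exact hc1
    rw [mem_ub_pair] at hc1 hc2
    exact ⟨hc1.1, hc1.2, hc2.1, hc2.2⟩
  have hneg : (0:X) ≤ -r := by
    apply hX ({z + r, -z + r} : Set X) (-r) (Set.toFinite _) ⟨z + r, by simp⟩
    have himg : ((-r) + ·) '' ({z + r, -z + r} : Set X) = ({z, -z} : Set X) := by
      rw [Set.image_pair]
      exact ub_pair_subst_set (by abel) (by abel)
    rw [himg]
    intro c hc
    obtain ⟨k1, k2, k3, k4⟩ := key c hc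
    rw [mem_ub_pair]
    exact ⟨k3, by calc -z + r = r - z := by abel
                   _ ≤ c := k2⟩
  have hpos : (0:X) ≤ r := by
    apply hX ({z - r, -z - r} : Set X) r (Set.toFinite _) ⟨z - r, by simp⟩
    have himg : (r + ·) '' ({z - r, -z - r} : Set X) = ({z, -z} : Set X) := by
      rw [Set.image_pair]
      exact ub_pair_subst_set (by abel) (by abel)
    rw [himg]
    intro c hc
    obtain ⟨k1, k2, k3, k4⟩ := key c hc
    rw [mem_ub_pair]
    exact ⟨k1, k4⟩
  have hr0 : r = 0 := le_antisymm (by simpa using hneg) hpos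
  have h5 := aux_half_eq q
  rw [← hr, hr0, smul_zero] at h5
  exact h5.symm

lemma exists_ub (hX : IsPreRiesz X) (a : X) : ∃ c : X, a ≤ c ∧ 0 ≤ c := by
  by_contra hcon
  push_neg at hcon
  have hub : upperBounds ({a, 0} : Set X) = ∅ := by
    ext c; simp only [Set.mem_empty_iff_false, iff_false]
    intro hc
    rw [mem_ub_pair] at hc
    exact hcon c hc.1 hc.2
  have h1 : (0:X) ≤ a := by
    apply hX ({-a, 0} : Set X) a (Set.toFinite _) ⟨-a, by simp⟩
    have himg : (a + ·) '' ({-a, 0} : Set X) = ({0, a} : Set X) := by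
      rw [Set.image_pair]
      exact ub_pair_subst_set (by abel) (by abel)
    rw [himg, Set.pair_comm 0 a, hub]
    exact Set.empty_subset _
  have h2 : (0:X) ≤ -a := by
    apply hX ({a, a + a} : Set X) (-a) (Set.toFinite _) ⟨a, by simp⟩
    have himg : ((-a) + ·) '' ({a, a + a} : Set X) = ({0, a} : Set X) := by
      rw [Set.image_pair]
      exact ub_pair_subst_set (by abel) (by abel)
    rw [himg]
    have : ({0, a} : Set X) = ({a, 0} : Set X) := Set.pair_comm 0 a
    rw [this, hub]
    exact Set.empty_subset _
  have ha : a = 0 := le_antisymm (by simpa using h2) h1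
  have : (0:X) ∈ upperBounds ({a, 0} : Set X) := by
    rw [mem_ub_pair, ha]; simp
  rw [hub] at this
  exact this

lemma bp_idem {P : X →ₗ[ℝ] X} (hP : IsBandProj P) (x : X) : P (P x) = P x := by
  have := LinearMap.ext_iff.mp hP.1 x
  simpa using this

lemma bp_fix {P : X →ₗ[ℝ] X} (hP : IsBandProj P) {y : X} (hy : y ∈ Set.range ⇑P) :
    P y = y := by
  obtain ⟨a, rfl⟩ := hy
  exact bp_idem hP a

lemma bp_ker_disj {P : X →ₗ[ℝ] X} (hP : IsBandProj P) {u y : X} (hu : P u = 0)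
    (hy : y ∈ Set.range ⇑P) : UDisjoint u y := by
  have hker : u ∈ (LinearMap.ker P : Set X) := LinearMap.mem_ker.mpr hu
  rw [hP.2.2] at hker
  exact hker y hy

lemma bp_pos {P : X →ₗ[ℝ] X} (hP : IsBandProj P) {x : X} (hx : 0 ≤ x) :
    0 ≤ P x ∧ P x ≤ x := by
  have hker : P (x - P x) = 0 := by
    rw [map_sub, bp_idem hP, sub_self]
  have hud : UDisjoint (x - P x) (P x) := bp_ker_disj hP hker ⟨x, rfl⟩
  unfold UDisjoint at hud
  have hx1 : x ∈ upperBounds ({(x - P x) + P x, -(x - P x) - P x} : Set X) := by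
    rw [mem_ub_pair]
    constructor
    · calc (x - P x) + P x = x := by abel
        _ ≤ x := le_refl x
    · calc -(x - P x) - P x = -x := by abel
        _ ≤ 0 := neg_nonpos.mpr hx
        _ ≤ x := hx
  rw [hud, mem_ub_pair] at hx1
  obtain ⟨ha, hb⟩ := hx1
  constructor
  · apply aux_half_nonneg
    have : (x - P x) - P x ≤ x := ha
    calc (0:X) = x - x := by abel
      _ ≤ x - ((x - P x) - P x) := by exact sub_le_sub_left this x
      _ = P x + P x := by abel
  · have h2 : P x - (x - P x) ≤ x := hb
    have : 0 ≤ (x - P x) + (x - P x) := by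
      calc (0:X) = x - x := by abel
        _ ≤ x - (P x - (x - P x)) := sub_le_sub_left h2 x
        _ = (x - P x) + (x - P x) := by abel
    have := aux_half_nonneg this
    exact sub_nonneg.mp this

lemma bp_mono {P : X →ₗ[ℝ] X} (hP : IsBandProj P) {x y : X} (h : x ≤ y) : P x ≤ P y := by
  have := (bp_pos hP (sub_nonneg.mpr h)).1
  rw [map_sub] at this
  exact sub_nonneg.mp this

lemma bp_compl_mono {P : X →ₗ[ℝ] X} (hP : IsBandProj P) {x y : X} (h : x ≤ y) :
    x - P x ≤ y - P y := by
  have := (bp_pos hP (sub_nonneg.mpr h)).2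
  rw [map_sub] at this
  have : (y - x) - (P y - P x) ≥ 0 := sub_nonneg.mpr this
  have h2 : 0 ≤ (y - P y) - (x - P x) := by
    calc (0:X) ≤ (y - x) - (P y - P x) := this
      _ = (y - P y) - (x - P x) := by abel
  exact sub_nonneg.mp h2

def applyL (l : List (X →ₗ[ℝ] X)) (x : X) : X := l.foldr (fun P y => P y) x

@[simp] lemma applyL_nil (x : X) : applyL [] x = x := rfl

@[simp] lemma applyL_cons (P : X →ₗ[ℝ] X) (l : List (X →ₗ[ℝ] X)) (x : X) :
    applyL (P :: l) x = P (applyL l x) := rfl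

lemma applyL_append (l₁ l₂ : List (X →ₗ[ℝ] X)) (x : X) :
    applyL (l₁ ++ l₂) x = applyL l₁ (applyL l₂ x) := by
  induction l₁ with
  | nil => rfl
  | cons P t ih => simp [ih]

lemma applyL_add (l : List (X →ₗ[ℝ] X)) (x y : X) :
    applyL l (x + y) = applyL l x + applyL l y := by
  induction l with
  | nil => rfl
  | cons P t ih => simp [ih]

lemma applyL_sub (l : List (X →ₗ[ℝ] X)) (x y : X) :
    applyL l (x - y) = applyL l x - applyL l y := by
  induction l with
  | nil => rfl
  | cons P t ih => simp [ih]

lemma applyL_smul (l : List (X →ₗ[ℝ] X)) (c : ℝ) (x : X) :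
    applyL l (c • x) = c • applyL l x := by
  induction l with
  | nil => rfl
  | cons P t ih => simp [ih]

@[simp] lemma applyL_zero (l : List (X →ₗ[ℝ] X)) : applyL l (0:X) = 0 := by
  induction l with
  | nil => rfl
  | cons P t ih => simp [ih]

lemma applyL_pos {l : List (X →ₗ[ℝ] X)} (hl : ∀ P ∈ l, IsBandProj P) {x : X}
    (hx : 0 ≤ x) : 0 ≤ applyL l x := by
  induction l with
  | nil => simpa using hx
  | cons P t ih =>
    have h1 := ih (fun Q hQ => hl Q (List.mem_cons_of_mem P hQ))
    simpa using (bp_pos (hl P (List.mem_cons_self)) h1).1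

lemma applyL_mono {l : List (X →ₗ[ℝ] X)} (hl : ∀ P ∈ l, IsBandProj P) {x y : X}
    (h : x ≤ y) : applyL l x ≤ applyL l y := by
  induction l with
  | nil => simpa using h
  | cons P t ih =>
    have h1 := ih (fun Q hQ => hl Q (List.mem_cons_of_mem P hQ))
    simpa using bp_mono (hl P (List.mem_cons_self)) h1

lemma applyL_le_self {l : List (X →ₗ[ℝ] X)} (hl : ∀ P ∈ l, IsBandProj P) {x : X}
    (hx : 0 ≤ x) : applyL l x ≤ x := by
  induction l with
  | nil => simp
  | cons P t ih =>
    have h1 := ih (fun Q hQ => hl Q (List.mem_cons_of_mem P hQ))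
    have h2 : 0 ≤ applyL t x := applyL_pos (fun Q hQ => hl Q (List.mem_cons_of_mem P hQ)) hx
    calc applyL (P :: t) x = P (applyL t x) := rfl
      _ ≤ applyL t x := (bp_pos (hl P (List.mem_cons_self)) h2).2
      _ ≤ x := h1

lemma applyL_fix {l : List (X →ₗ[ℝ] X)} {ℙ : Set (X →ₗ[ℝ] X)} (hl : ∀ P ∈ l, P ∈ ℙ)
    {y : X} (hy : ∀ P ∈ ℙ, P y = y) : applyL l y = y := by
  induction l with
  | nil => rfl
  | cons P t ih =>
    have h1 := ih (fun Q hQ => hl Q (List.mem_cons_of_mem P hQ))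
    calc applyL (P :: t) y = P (applyL t y) := rfl
      _ = P y := by rw [h1]
      _ = y := hy P (hl P (List.mem_cons_self))

def DSet (ℙ : Set (X →ₗ[ℝ] X)) (x : X) : Set X :=
  {y | ∃ l : List (X →ₗ[ℝ] X), (∀ P ∈ l, P ∈ ℙ) ∧ y = applyL l x}

lemma DSet_self (ℙ : Set (X →ₗ[ℝ] X)) (x : X) : x ∈ DSet ℙ x :=
  ⟨[], by simp, rfl⟩

lemma DSet_glb_exists
    (hdc : ∀ A : Set X, A.Nonempty → DirectedOn (· ≤ ·) A → BddAbove A → ∃ s, IsLUB A s)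
    {ℙ : Set (X →ₗ[ℝ] X)} (hℙ : ∀ P ∈ ℙ, IsBandProj P) {x : X} (hx : 0 ≤ x) :
    ∃ s, IsGLB (DSet ℙ x) s := by
  have hbp : ∀ (l : List (X →ₗ[ℝ] X)), (∀ P ∈ l, P ∈ ℙ) → ∀ P ∈ l, IsBandProj P :=
    fun l hl P hP => hℙ P (hl P hP)
  have hne : (-(DSet ℙ x)).Nonempty := ⟨-x, Set.neg_mem_neg.mpr (DSet_self ℙ x)⟩
  have hdir : DirectedOn (· ≤ ·) (-(DSet ℙ x)) := by
    intro a ha b hb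
    rw [Set.mem_neg] at ha hb
    obtain ⟨l₁, hl₁, h₁⟩ := ha
    obtain ⟨l₂, hl₂, h₂⟩ := hb
    have hmem : applyL (l₁ ++ l₂) x ∈ DSet ℙ x := by
      refine ⟨l₁ ++ l₂, ?_, rfl⟩
      intro P hP
      rcases List.mem_append.mp hP with h | h
      · exact hl₁ P h
      · exact hl₂ P h
    refine ⟨-(applyL (l₁ ++ l₂) x), Set.neg_mem_neg.mpr hmem, ?_, ?_⟩
    · have h3 : applyL (l₁ ++ l₂) x ≤ applyL l₁ x := by
        rw [applyL_append]
        exact applyL_mono (hbp l₁ hl₁) (applyL_le_self (hbp l₂ hl₂) hx)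
      rw [← h₁] at h3
      show a ≤ -applyL (l₁ ++ l₂) x
      exact le_neg.mpr h3
    · have h3 : applyL (l₁ ++ l₂) x ≤ applyL l₂ x := by
        rw [applyL_append]
        exact applyL_le_self (hbp l₁ hl₁) (applyL_pos (hbp l₂ hl₂) hx)
      rw [← h₂] at h3
      show b ≤ -applyL (l₁ ++ l₂) x
      exact le_neg.mpr h3
  have hbdd : BddAbove (-(DSet ℙ x)) := by
    refine ⟨0, ?_⟩
    intro a ha
    rw [Set.mem_neg] at ha
    obtain ⟨l, hl, h⟩ := ha
    have h5 := applyL_pos (hbp l hl) hx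
    rw [← h] at h5
    show a ≤ 0
    have h6 := neg_le_neg h5
    simpa using h6
  obtain ⟨s, hs⟩ := hdc (-(DSet ℙ x)) hne hdir hbdd
  have h2 := hs.neg
  rw [neg_neg] at h2
  exact ⟨-s, h2⟩

/-- In a Dedekind complete pre-Riesz space, for any set `ℙ` of band projections there is a
unique band projection `P₀` with range `⋂_{P ∈ ℙ} PX`; if `ℙ` is nonempty then `P₀ x` is
the infimum of `{P x : P ∈ ℙ}` for each `x ∈ X₊`. -/
theorem stmt_10 (hX : IsPreRiesz X)
    (hdc : ∀ A : Set X, A.Nonempty → DirectedOn (· ≤ ·) A → BddAbove A → ∃ s, IsLUB A s)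
    (ℙ : Set (X →ₗ[ℝ] X)) (hℙ : ∀ P ∈ ℙ, IsBandProj P) :
    ∃ P₀ : X →ₗ[ℝ] X,
      (IsBandProj P₀ ∧ Set.range ⇑P₀ = ⋂ P ∈ ℙ, Set.range ⇑P) ∧
      (∀ Q : X →ₗ[ℝ] X, (IsBandProj Q ∧ Set.range ⇑Q = ⋂ P ∈ ℙ, Set.range ⇑P) → Q = P₀) ∧
      (ℙ.Nonempty → ∀ x : X, 0 ≤ x → IsGLB {y : X | ∃ P ∈ ℙ, y = P x} (P₀ x)) := by
  classical
  set B : Set X := ⋂ P ∈ ℙ, Set.range ⇑P with hBdef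
  have hbpl : ∀ l : List (X →ₗ[ℝ] X), (∀ P ∈ l, P ∈ ℙ) → ∀ P ∈ l, IsBandProj P :=
    fun l hl P hP => hℙ P (hl P hP)
  have hBmem : ∀ y : X, y ∈ B ↔ ∀ P ∈ ℙ, y ∈ Set.range ⇑P := by
    intro y; simp [hBdef]
  have hBfix : ∀ y ∈ B, ∀ P ∈ ℙ, P y = y :=
    fun y hy P hP => bp_fix (hℙ P hP) ((hBmem y).mp hy P hP)
  have hBadd : ∀ b₁ ∈ B, ∀ b₂ ∈ B, b₁ + b₂ ∈ B := by
    intro b₁ h1 b₂ h2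
    refine (hBmem _).mpr fun P hP => ⟨b₁ + b₂, ?_⟩
    rw [map_add, hBfix b₁ h1 P hP, hBfix b₂ h2 P hP]
  have hBneg : ∀ b ∈ B, -b ∈ B := by
    intro b h1
    refine (hBmem _).mpr fun P hP => ⟨-b, ?_⟩
    rw [map_neg, hBfix b h1 P hP]
  have h0B : (0 : X) ∈ B := (hBmem 0).mpr fun P _ => ⟨0, map_zero P⟩
  -- infima of sets of products
  have hglb : ∀ x : X, 0 ≤ x → ∃ s, IsGLB (DSet ℙ x) s :=
    fun x hx => DSet_glb_exists hdc hℙ hx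
  choose! m hm using hglb
  have hm_lb : ∀ x, 0 ≤ x → ∀ l, (∀ P ∈ l, P ∈ ℙ) → m x ≤ applyL l x :=
    fun x hx l hl => (hm x hx).1 ⟨l, hl, rfl⟩
  have hm_ge : ∀ x, 0 ≤ x → ∀ ℓ, (∀ l, (∀ P ∈ l, P ∈ ℙ) → ℓ ≤ applyL l x) → ℓ ≤ m x := by
    intro x hx ℓ h
    apply (hm x hx).2
    rintro y ⟨l, hl, rfl⟩
    exact h l hl
  have hm_nonneg : ∀ x, 0 ≤ x → 0 ≤ m x :=
    fun x hx => hm_ge x hx 0 (fun l hl => applyL_pos (hbpl l hl) hx)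
  have hm_le : ∀ x, 0 ≤ x → m x ≤ x := by
    intro x hx
    have := hm_lb x hx [] (by simp)
    simpa using this
  have hm_zero : m 0 = 0 := le_antisymm (by simpa using hm_le 0 le_rfl) (hm_nonneg 0 le_rfl)
  have hm_add : ∀ x y, 0 ≤ x → 0 ≤ y → m (x + y) = m x + m y := by
    intro x y hx hy
    have hxy : 0 ≤ x + y := add_nonneg hx hy
    apply le_antisymm
    · have step : ∀ l₁, (∀ P ∈ l₁, P ∈ ℙ) → ∀ l₂, (∀ P ∈ l₂, P ∈ ℙ) →
          m (x + y) ≤ applyL l₁ x + applyL l₂ y := by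
        intro l₁ hl₁ l₂ hl₂
        have hl12 : ∀ P ∈ l₁ ++ l₂, P ∈ ℙ := by
          intro P hP
          rcases List.mem_append.mp hP with h | h
          · exact hl₁ P h
          · exact hl₂ P h
        have h1 : m (x + y) ≤ applyL (l₁ ++ l₂) (x + y) := hm_lb _ hxy _ hl12
        rw [applyL_add, applyL_append, applyL_append] at h1
        have h3 : applyL l₁ (applyL l₂ x) ≤ applyL l₁ x :=
          applyL_mono (hbpl l₁ hl₁) (applyL_le_self (hbpl l₂ hl₂) hx)
        have h4 : applyL l₁ (applyL l₂ y) ≤ applyL l₂ y :=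
          applyL_le_self (hbpl l₁ hl₁) (applyL_pos (hbpl l₂ hl₂) hy)
        exact h1.trans (add_le_add h3 h4)
      have step2 : ∀ l₁, (∀ P ∈ l₁, P ∈ ℙ) → m (x + y) - applyL l₁ x ≤ m y := by
        intro l₁ hl₁
        apply hm_ge y hy
        intro l₂ hl₂
        exact sub_le_iff_le_add'.mpr (step l₁ hl₁ l₂ hl₂)
      have step3 : m (x + y) - m y ≤ m x := by
        apply hm_ge x hx
        intro l₁ hl₁
        have := step2 l₁ hl₁
        -- m(x+y) - applyL l₁ x ≤ m y  ⇒  m(x+y) - m y ≤ applyL l₁ x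
        have h5 : m (x + y) - m y ≤ applyL l₁ x := by
          have h6 := sub_le_iff_le_add.mp this
          -- h6 : m (x+y) ≤ m y + applyL l₁ x
          exact sub_le_iff_le_add'.mpr h6
        exact h5
      exact sub_le_iff_le_add.mp step3
    · apply hm_ge (x + y) hxy
      intro l hl
      rw [applyL_add]
      exact add_le_add (hm_lb x hx l hl) (hm_lb y hy l hl)
  have hm_smul : ∀ c : ℝ, 0 < c → ∀ x, 0 ≤ x → m (c • x) = c • m x := by
    intro c hc x hx
    have hcx : 0 ≤ c • x := smul_nonneg hc.le hx
    apply le_antisymm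
    · have h1 : c⁻¹ • m (c • x) ≤ m x := by
        apply hm_ge x hx
        intro l hl
        have h2 : m (c • x) ≤ applyL l (c • x) := hm_lb _ hcx l hl
        rw [applyL_smul] at h2
        have h3 := smul_le_smul_of_nonneg_left h2 (inv_nonneg.mpr hc.le)
        rwa [inv_smul_smul₀ hc.ne' ] at h3
      have h4 := smul_le_smul_of_nonneg_left h1 hc.le
      rwa [smul_inv_smul₀ hc.ne'] at h4
    · apply hm_ge (c • x) hcx
      intro l hl
      rw [applyL_smul]
      exact smul_le_smul_of_nonneg_left (hm_lb x hx l hl) hc.le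
  have hm_shift : ∀ y v, 0 ≤ v → 0 ≤ y + v → (∀ P ∈ ℙ, P y = y) → m (y + v) = y + m v := by
    intro y v hv hyv hfixy
    apply le_antisymm
    · have h1 : m (y + v) - y ≤ m v := by
        apply hm_ge v hv
        intro l hl
        have h2 : m (y + v) ≤ applyL l (y + v) := hm_lb _ hyv l hl
        rw [applyL_add, applyL_fix hl hfixy] at h2
        exact sub_le_iff_le_add'.mpr h2
      exact sub_le_iff_le_add'.mp h1
    · apply hm_ge (y + v) hyv
      intro l hl
      rw [applyL_add, applyL_fix hl hfixy]
      exact add_le_add_right (hm_lb v hv l hl) y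
  -- decomposition into positive parts
  choose pos hpos1 hpos2 using exists_ub hX
  have hvx : ∀ x : X, 0 ≤ pos x - x := fun x => sub_nonneg.mpr (hpos1 x)
  have hP0_eq : ∀ x u v : X, 0 ≤ u → 0 ≤ v → x = u - v →
      m (pos x) - m (pos x - x) = m u - m v := by
    intro x u v hu hv hxuv
    have h1 : u + (pos x - x) = pos x + v := by rw [hxuv]; abel
    have h2 : m u + m (pos x - x) = m (pos x) + m v := by
      rw [← hm_add u _ hu (hvx x), ← hm_add (pos x) v (hpos2 x) hv, h1]
    exact sub_eq_sub_iff_add_eq_add.mpr h2.symm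
  have hadd : ∀ x y : X, m (pos (x + y)) - m (pos (x + y) - (x + y)) =
      (m (pos x) - m (pos x - x)) + (m (pos y) - m (pos y - y)) := by
    intro x y
    have h1 : x + y = (pos x + pos y) - ((pos x - x) + (pos y - y)) := by abel
    rw [hP0_eq (x + y) _ _ (add_nonneg (hpos2 x) (hpos2 y)) (add_nonneg (hvx x) (hvx y)) h1,
      hm_add _ _ (hpos2 x) (hpos2 y), hm_add _ _ (hvx x) (hvx y)]
    abel
  have hsmul0 : ∀ (c : ℝ), 0 ≤ c → ∀ x : X, m (c • x) = c • m x → True := fun _ _ _ _ => trivial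
  have hmsmul' : ∀ (c : ℝ), 0 ≤ c → ∀ x : X, 0 ≤ x → m (c • x) = c • m x := by
    intro c hc x hx
    rcases eq_or_lt_of_le hc with h | h
    · rw [← h, zero_smul, zero_smul, hm_zero]
    · exact hm_smul c h x hx
  have hsmul : ∀ (c : ℝ) (x : X), m (pos (c • x)) - m (pos (c • x) - c • x) =
      c • (m (pos x) - m (pos x - x)) := by
    intro c x
    rcases le_or_gt 0 c with hc | hc
    · have h1 : c • x = (c • pos x) - (c • (pos x - x)) := by rw [← smul_sub]; congr 1; abel
      rw [hP0_eq (c • x) _ _ (smul_nonneg hc (hpos2 x)) (smul_nonneg hc (hvx x)) h1,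
        hmsmul' c hc _ (hpos2 x), hmsmul' c hc _ (hvx x), ← smul_sub]
    · have hd : (0:ℝ) < -c := neg_pos.mpr hc
      have h1 : c • x = ((-c) • (pos x - x)) - ((-c) • pos x) := by
        rw [← smul_sub]
        have : pos x - x - pos x = -x := by abel
        rw [this, smul_neg, neg_smul, neg_neg]
      rw [hP0_eq (c • x) _ _ (smul_nonneg hd.le (hvx x)) (smul_nonneg hd.le (hpos2 x)) h1,
        hmsmul' _ hd.le _ (hvx x), hmsmul' _ hd.le _ (hpos2 x)]
      rw [smul_sub, neg_smul, neg_smul]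
      abel
  set P₀ : X →ₗ[ℝ] X :=
    { toFun := fun x => m (pos x) - m (pos x - x),
      map_add' := hadd,
      map_smul' := hsmul } with hP₀def
  have hP0_apply : ∀ x : X, P₀ x = m (pos x) - m (pos x - x) := fun x => rfl
  have hP0_pos_val : ∀ x, 0 ≤ x → P₀ x = m x := by
    intro x hx
    rw [hP0_apply, hP0_eq x x 0 hx le_rfl (by rw [sub_zero]), hm_zero, sub_zero]
  -- general lower bound property
  have hα : ∀ (x ℓ : X), (∀ l, (∀ P ∈ l, P ∈ ℙ) → ℓ ≤ applyL l x) → ℓ ≤ P₀ x := by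
    intro x ℓ hl
    rw [hP0_apply]
    have h1 : ∀ l, (∀ P ∈ l, P ∈ ℙ) → ℓ + m (pos x - x) ≤ applyL l (pos x) := by
      intro l hlm
      have h2 := hl l hlm
      have h3 : applyL l x = applyL l (pos x) - applyL l (pos x - x) := by
        rw [← applyL_sub]; congr 1; abel
      rw [h3] at h2
      have h4 : m (pos x - x) ≤ applyL l (pos x - x) := hm_lb _ (hvx x) l hlm
      calc ℓ + m (pos x - x)
          ≤ (applyL l (pos x) - applyL l (pos x - x)) + applyL l (pos x - x) :=
            add_le_add h2 h4
        _ = applyL l (pos x) := by abel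
    have h5 : ℓ + m (pos x - x) ≤ m (pos x) := hm_ge (pos x) (hpos2 x) _ h1
    exact le_sub_iff_add_le.mpr h5
  -- P fixes P₀ x
  have hfixpos : ∀ P ∈ ℙ, ∀ x, 0 ≤ x → P (m x) = m x := by
    intro P hP x hx
    have hPb := hℙ P hP
    have ha : 0 ≤ m x := hm_nonneg x hx
    have h1 : P (m x) ≤ m x := (bp_pos hPb ha).2
    have h2 : m x ≤ P (P x) := by
      have h2' := hm_lb x hx [P, P] (by
        intro Q hQ
        rcases List.mem_cons.mp hQ with h | h
        · rw [h]; exact hP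
        · rcases List.mem_cons.mp h with h' | h'
          · rw [h']; exact hP
          · simp at h')
      simpa using h2'
    have h3 := bp_compl_mono hPb h2
    rw [bp_idem hPb (P x), sub_self] at h3
    exact le_antisymm h1 (sub_nonpos.mp h3)
  have hfix : ∀ P ∈ ℙ, ∀ x, P (P₀ x) = P₀ x := by
    intro P hP x
    rw [hP0_apply, map_sub, hfixpos P hP _ (hpos2 x), hfixpos P hP _ (hvx x)]
  have hrange_sub : ∀ x, P₀ x ∈ B :=
    fun x => (hBmem _).mpr fun P hP => ⟨P₀ x, hfix P hP x⟩
  have hBfixP0 : ∀ y ∈ B, P₀ y = y := by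
    intro y hy
    have hfixy : ∀ P ∈ ℙ, P y = y := hBfix y hy
    have heq : y + (pos y - y) = pos y := by abel
    have hsh := hm_shift y (pos y - y) (hvx y) (by rw [heq]; exact hpos2 y) hfixy
    rw [heq] at hsh
    rw [hP0_apply, hsh]
    abel
  have hrange : Set.range ⇑P₀ = B := by
    apply Set.Subset.antisymm
    · rintro y ⟨x, rfl⟩; exact hrange_sub x
    · intro y hy; exact ⟨y, hBfixP0 y hy⟩
  have hidem : P₀ ∘ₗ P₀ = P₀ := by
    apply LinearMap.ext
    intro x
    simpa using hBfixP0 (P₀ x) (hrange_sub x)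
  -- the key disjointness inequality
  have hkey : ∀ x b, b ∈ B → ∀ c : X,
      (x - P₀ x) + b ≤ c → -(x - P₀ x) - b ≤ c → (x - P₀ x) - b ≤ c := by
    intro x b hb c hc1 hc2
    have hβ : ∀ l, (∀ P ∈ l, P ∈ ℙ) →
        (x - P₀ x) - b - ((applyL l x - P₀ x) + (applyL l x - P₀ x)) ≤ c := by
      intro l
      induction l with
      | nil =>
        intro _
        have he : (x - P₀ x) - b - ((applyL [] x - P₀ x) + (applyL [] x - P₀ x))
            = -(x - P₀ x) - b := by simp only [applyL_nil]; abel
        rw [he]; exact hc2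
      | cons P t ih =>
        intro hl
        have hlt : ∀ Q ∈ t, Q ∈ ℙ := fun Q hQ => hl Q (List.mem_cons_of_mem P hQ)
        have hPm : P ∈ ℙ := hl P (List.mem_cons_self)
        have hPb : IsBandProj P := hℙ P hPm
        have hPbe : P b = b := hBfix b hb P hPm
        have hPP0 : P (P₀ x) = P₀ x := hfix P hPm x
        have ih' := ih hlt
        have s1 := bp_mono hPb ih'
        have e1 : P ((x - P₀ x) - b - ((applyL t x - P₀ x) + (applyL t x - P₀ x)))
            = (P x - P₀ x) - b - ((P (applyL t x) - P₀ x) + (P (applyL t x) - P₀ x)) := by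
          simp only [map_sub, map_add, hPP0, hPbe]
        rw [e1] at s1
        have s2 := bp_compl_mono hPb hc1
        have e2 : ((x - P₀ x) + b) - P ((x - P₀ x) + b) = (x - P₀ x) - (P x - P₀ x) := by
          simp only [map_add, map_sub, hPP0, hPbe]
          abel
        rw [e2] at s2
        have s3 := add_le_add s1 s2
        calc (x - P₀ x) - b - ((applyL (P :: t) x - P₀ x) + (applyL (P :: t) x - P₀ x))
            = ((P x - P₀ x) - b - ((P (applyL t x) - P₀ x) + (P (applyL t x) - P₀ x)))
              + ((x - P₀ x) - (P x - P₀ x)) := by simp only [applyL_cons]; abel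
          _ ≤ P c + (c - P c) := s3
          _ = c := by abel
    have hhh : (1/2 : ℝ) • ((x - P₀ x) - b - c) + (1/2 : ℝ) • ((x - P₀ x) - b - c)
        = (x - P₀ x) - b - c := by
      rw [← add_smul]; norm_num
    have hl2 : ∀ l, (∀ P ∈ l, P ∈ ℙ) →
        P₀ x + (1/2 : ℝ) • ((x - P₀ x) - b - c) ≤ applyL l x := by
      intro l hl
      have h7 : (1/2 : ℝ) • ((x - P₀ x) - b - c) ≤ applyL l x - P₀ x := by
        apply aux_half_le
        rw [hhh]
        exact sub_le_comm.mp (hβ l hl)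
      calc P₀ x + (1/2 : ℝ) • ((x - P₀ x) - b - c)
          ≤ P₀ x + (applyL l x - P₀ x) := add_le_add_right h7 _
        _ = applyL l x := by abel
    have h8 := hα x (P₀ x + (1/2 : ℝ) • ((x - P₀ x) - b - c)) hl2
    have h9 : (1/2 : ℝ) • ((x - P₀ x) - b - c) ≤ 0 := (add_le_iff_nonpos_right _).mp h8
    have h10 : (x - P₀ x) - b - c ≤ 0 := by
      rw [← hhh]; exact add_nonpos h9 h9
    exact sub_nonpos.mp h10
  have hdisj : ∀ x b, b ∈ B → UDisjoint (x - P₀ x) b := by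
    intro x b hb
    unfold UDisjoint
    ext c
    simp only [mem_ub_pair]
    constructor
    · rintro ⟨hc1, hc2⟩
      refine ⟨hkey x b hb c hc1 hc2, ?_⟩
      have h1 : ((-x) - P₀ (-x)) + (-b) ≤ c := by
        have he : ((-x) - P₀ (-x)) + (-b) = -(x - P₀ x) - b := by rw [map_neg]; abel
        rw [he]; exact hc2
      have h2 : -((-x) - P₀ (-x)) - (-b) ≤ c := by
        have he : -((-x) - P₀ (-x)) - (-b) = (x - P₀ x) + b := by rw [map_neg]; abel
        rw [he]; exact hc1
      have h3 := hkey (-x) (-b) (hBneg b hb) c h1 h2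
      have he : ((-x) - P₀ (-x)) - (-b) = b - (x - P₀ x) := by rw [map_neg]; abel
      rwa [he] at h3
    · rintro ⟨hc1, hc2⟩
      constructor
      · have h1 : (x - P₀ x) + (-b) ≤ c := by
          have he : (x - P₀ x) + (-b) = (x - P₀ x) - b := by abel
          rw [he]; exact hc1
        have h2 : -(x - P₀ x) - (-b) ≤ c := by
          have he : -(x - P₀ x) - (-b) = b - (x - P₀ x) := by abel
          rw [he]; exact hc2
        have h3 := hkey x (-b) (hBneg b hb) c h1 h2
        have he : (x - P₀ x) - (-b) = (x - P₀ x) + b := by abel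
        rwa [he] at h3
      · have h1 : ((-x) - P₀ (-x)) + b ≤ c := by
          have he : ((-x) - P₀ (-x)) + b = b - (x - P₀ x) := by rw [map_neg]; abel
          rw [he]; exact hc2
        have h2 : -((-x) - P₀ (-x)) - b ≤ c := by
          have he : -((-x) - P₀ (-x)) - b = (x - P₀ x) - b := by rw [map_neg]; abel
          rw [he]; exact hc1
        have h3 := hkey (-x) b hb c h1 h2
        have he : ((-x) - P₀ (-x)) - b = -(x - P₀ x) - b := by rw [map_neg]; abel
        rwa [he] at h3
  have hdcomp_mem : ∀ x, (x - P₀ x) ∈ dComp B := fun x s hs => hdisj x s hs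
  have hker_sub : ∀ z, P₀ z = 0 → z ∈ dComp B := by
    intro z hz
    have h1 := hdcomp_mem z
    rwa [hz, sub_zero] at h1
  have hker_sup : ∀ z ∈ dComp B, P₀ z = 0 := by
    intro z hz
    have hp : P₀ z ∈ B := hrange_sub z
    have hw : z - P₀ z ∈ dComp B := hdcomp_mem z
    have h2p : P₀ z + P₀ z ∈ B := hBadd _ hp _ hp
    have h1 : upperBounds ({z, -z} : Set X)
        = upperBounds ({z - (P₀ z + P₀ z), (P₀ z + P₀ z) - z} : Set X) := by
      have hud : UDisjoint (z - P₀ z) (P₀ z) := hw (P₀ z) hp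
      unfold UDisjoint at hud
      calc upperBounds ({z, -z} : Set X)
          = upperBounds ({(z - P₀ z) + P₀ z, -(z - P₀ z) - P₀ z} : Set X) := by
            rw [ub_pair_subst_set (by abel : z = (z - P₀ z) + P₀ z)
              (by abel : -z = -(z - P₀ z) - P₀ z)]
        _ = upperBounds ({(z - P₀ z) - P₀ z, P₀ z - (z - P₀ z)} : Set X) := hud
        _ = upperBounds ({z - (P₀ z + P₀ z), (P₀ z + P₀ z) - z} : Set X) := by
            rw [ub_pair_subst_set (by abel : (z - P₀ z) - P₀ z = z - (P₀ z + P₀ z))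
              (by abel : P₀ z - (z - P₀ z) = (P₀ z + P₀ z) - z)]
    have h2 : upperBounds ({z + (P₀ z + P₀ z), -z - (P₀ z + P₀ z)} : Set X)
        = upperBounds ({z - (P₀ z + P₀ z), (P₀ z + P₀ z) - z} : Set X) := hz _ h2p
    exact aux_vanish hX z (P₀ z) h1 h2
  have hkerset : (LinearMap.ker P₀ : Set X) = dComp B := by
    ext z
    constructor
    · intro h
      exact hker_sub z (LinearMap.mem_ker.mp h)
    · intro h
      exact LinearMap.mem_ker.mpr (hker_sup z h)
  have hband : IsBand B := by
    apply Set.Subset.antisymm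
    · intro b hb s hs
      exact ud_symm (hs b hb)
    · intro z hz
      have hp : P₀ z ∈ B := hrange_sub z
      have hw : z - P₀ z ∈ dComp B := hdcomp_mem z
      have hww : (z - P₀ z) + (z - P₀ z) ∈ dComp B := by
        have h1 := hdcomp_mem (z + z)
        have he : (z + z) - P₀ (z + z) = (z - P₀ z) + (z - P₀ z) := by
          rw [map_add]; abel
        rwa [he] at h1
      have h1 : upperBounds ({z, -z} : Set X)
          = upperBounds ({z - ((z - P₀ z) + (z - P₀ z)),
              ((z - P₀ z) + (z - P₀ z)) - z} : Set X) := by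
        have hud : UDisjoint (P₀ z) (z - P₀ z) := ud_symm (hw (P₀ z) hp)
        unfold UDisjoint at hud
        calc upperBounds ({z, -z} : Set X)
            = upperBounds ({P₀ z + (z - P₀ z), -(P₀ z) - (z - P₀ z)} : Set X) := by
              rw [ub_pair_subst_set (by abel : z = P₀ z + (z - P₀ z))
                (by abel : -z = -(P₀ z) - (z - P₀ z))]
          _ = upperBounds ({P₀ z - (z - P₀ z), (z - P₀ z) - P₀ z} : Set X) := hud
          _ = upperBounds ({z - ((z - P₀ z) + (z - P₀ z)),
                ((z - P₀ z) + (z - P₀ z)) - z} : Set X) := by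
              rw [ub_pair_subst_set
                (by abel : P₀ z - (z - P₀ z) = z - ((z - P₀ z) + (z - P₀ z)))
                (by abel : (z - P₀ z) - P₀ z = ((z - P₀ z) + (z - P₀ z)) - z)]
      have h2 : upperBounds ({z + ((z - P₀ z) + (z - P₀ z)),
            -z - ((z - P₀ z) + (z - P₀ z))} : Set X)
          = upperBounds ({z - ((z - P₀ z) + (z - P₀ z)),
              ((z - P₀ z) + (z - P₀ z)) - z} : Set X) := hz _ hww
      have hw0 := aux_vanish hX z (z - P₀ z) h1 h2
      have hzp : z = P₀ z := by
        have := sub_eq_zero.mp hw0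
        exact this
      rw [hzp]
      exact hp
  have hint : B ∩ dComp B = {0} := by
    apply Set.Subset.antisymm
    · rintro y ⟨hy1, hy2⟩
      have := ud_self (hy2 y hy1)
      simp [this]
    · intro y hy
      rw [Set.mem_singleton_iff] at hy
      subst hy
      exact ⟨h0B, fun s _ => ud_zero s⟩
  have hprojband : IsProjBand B :=
    ⟨hband, hint, fun x => ⟨P₀ x, hrange_sub x, x - P₀ x, hdcomp_mem x, by abel⟩⟩
  refine ⟨P₀, ⟨⟨hidem, ?_, ?_⟩, hrange⟩, ?_, ?_⟩
  · rw [hrange]; exact hprojband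
  · rw [hrange]; exact hkerset
  · rintro Q ⟨hQbp, hQr⟩
    apply LinearMap.ext
    intro x
    have hw : x - P₀ x ∈ dComp B := hdcomp_mem x
    have hker' := hQbp.2.2
    rw [hQr] at hker'
    have hwk : Q (x - P₀ x) = 0 := by
      have hmem : (x - P₀ x) ∈ (LinearMap.ker Q : Set X) := by rw [hker']; exact hw
      exact LinearMap.mem_ker.mp hmem
    have hfixQ : Q (P₀ x) = P₀ x := bp_fix hQbp (by rw [hQr]; exact hrange_sub x)
    calc Q x = Q (P₀ x) + Q (x - P₀ x) := by rw [← map_add]; congr 1; abel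
      _ = P₀ x := by rw [hwk, hfixQ, add_zero]
  · intro hne x hx
    constructor
    · rintro y ⟨P, hP, rfl⟩
      have h1 := hm_lb x hx [P] (by
        intro Q hQ
        rcases List.mem_cons.mp hQ with h | h
        · rw [h]; exact hP
        · simp at h)
      rw [hP0_pos_val x hx]
      simpa using h1
    · intro ℓ hℓ
      apply hα x ℓ
      intro l
      induction l with
      | nil =>
        intro _
        obtain ⟨P, hP⟩ := hne
        have h1 : ℓ ≤ P x := hℓ ⟨P, hP, rfl⟩
        have h2 : P x ≤ x := (bp_pos (hℙ P hP) hx).2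
        simpa using h1.trans h2
      | cons P t ih =>
        intro hl
        have hPm := hl P (List.mem_cons_self)
        have hPb := hℙ P hPm
        have h1 : ℓ ≤ P x := hℓ ⟨P, hPm, rfl⟩
        have h2 : ℓ ≤ P ℓ := by
          have h3 := bp_compl_mono hPb h1
          rw [bp_idem hPb, sub_self] at h3
          exact sub_nonpos.mp h3
        have h5 := ih (fun Q hQ => hl Q (List.mem_cons_of_mem P hQ))
        have h6 := bp_mono hPb h5
        calc ℓ ≤ P ℓ := h2
          _ ≤ P (applyL t x) := h6
          _ = applyL (P :: t) x := rfl
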